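/- Let A_ℓ = [I_{n_u} I_{n_u} ⊗ z_ℓᵀ M_z] ∈ ℝ^{n_u × n_θ} with n_θ = n_u(n_z+1), where M_z is symmetric positive definite. If z_1,…,z_N ∈ ℝ^{n_z} are linearly independent with N ≤ n_z, then the stacked matrix A = [A_1; A_2; …; A_N] ∈ ℝ^{n_u N × n_θ} has full row rank n_u N. -/

import Mathlib

open Matrix

/-- the stacked matrix A = [A_1; …; A_N], with
A_ℓ = [I_{n_u}  I_{n_u} ⊗ z_ℓᵀ M_z], has full row rank n_u * N when
z_1, …, z_N are linearly independent and N ≤ n_z. -/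
theorem stacked_discrepancy_matrix_full_row_rank
    (nu nz N : ℕ)
    (Mz : Matrix (Fin nz) (Fin nz) ℝ) (hMz : Mz.PosDef)
    (z : Fin N → (Fin nz → ℝ)) (hz : LinearIndependent ℝ z) (hN : N ≤ nz)
    (A : Matrix (Fin N × Fin nu) (Fin nu ⊕ Fin nu × Fin nz) ℝ)
    (hA : ∀ ℓ i j, A (ℓ, i) (Sum.inl j) = (1 : Matrix (Fin nu) (Fin nu) ℝ) i j)
    (hA' : ∀ ℓ i j k,
      A (ℓ, i) (Sum.inr (j, k)) =
        (1 : Matrix (Fin nu) (Fin nu) ℝ) i j * Matrix.vecMul (z ℓ) Mz k) :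
    A.rank = nu * N := by
  classical
  have hli : LinearIndependent ℝ A := by
    refine Fintype.linearIndependent_iff.mpr ?_
    intro c hc
    have key : ∀ j : Fin nu, ∀ ℓ : Fin N, c (ℓ, j) = 0 := by
      intro j
      set w : Fin nz → ℝ := ∑ ℓ : Fin N, c (ℓ, j) • z ℓ with hw_def
      have hw : w ᵥ* Mz = 0 := by
        funext k
        have h1 := congrFun hc (Sum.inr (j, k))
        simp only [Finset.sum_apply, Pi.smul_apply, smul_eq_mul, Pi.zero_apply] at h1
        rw [Fintype.sum_prod_type] at h1
        have h2 : ∀ ℓ : Fin N, ∑ i : Fin nu,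
            c (ℓ, i) * A (ℓ, i) (Sum.inr (j, k)) = c (ℓ, j) * (z ℓ ᵥ* Mz) k := by
          intro ℓ
          rw [Finset.sum_eq_single j]
          · rw [hA' ℓ j j k]; simp [Matrix.one_apply]
          · intro i _ hij
            rw [hA' ℓ i j k, Matrix.one_apply_ne hij]; ring
          · intro h; exact absurd (Finset.mem_univ j) h
        simp only [h2] at h1
        have h3 : w ᵥ* Mz = ∑ ℓ : Fin N, c (ℓ, j) • (z ℓ ᵥ* Mz) := by
          rw [hw_def, ← Mz.vecMulLinear_apply, map_sum]
          simp [Matrix.vecMulLinear_apply]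
        have h4 := congrFun h3 k
        simp only [Finset.sum_apply, Pi.smul_apply, smul_eq_mul] at h4
        rw [h4, h1]; rfl
      have hw0 : w = 0 := by
        by_contra hne
        have hpos := hMz.dotProduct_mulVec_pos hne
        have : star w ⬝ᵥ Mz *ᵥ w = 0 := by
          rw [show (star w : Fin nz → ℝ) = w from rfl,
            Matrix.dotProduct_mulVec, hw, zero_dotProduct]
        rw [this] at hpos
        exact lt_irrefl 0 hpos
      have := Fintype.linearIndependent_iff.mp hz (fun ℓ => c (ℓ, j)) (by
        simpa [hw_def] using hw0)
      exact this
    intro p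
    exact key p.2 p.1
  rw [LinearIndependent.rank_matrix (M := A) hli]
  simp [Fintype.card_prod, mul_comm]
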